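/- arXiv:1808.01707 — 3 statements merged into one kernel-verified Lean document; each statement's English description precedes it below -/
import Mathlib

section
/- Let f₁, f₂ : ℝ → ℝ be strictly concave with continuous derivatives, p₁ > 0, and f₂'(0) > f₁'(p₁). Then there exists δ ∈ (0, p₁) such that f₁(p₁−δ) + f₂(δ) > f₁(p₁) + f₂(0). -/
/-- Exchange argument for an inactive subchannel: if f₂'(0) > f₁'(p₁) with p₁ > 0,
a small transfer of power from subchannel 1 to subchannel 2 strictly improves the sum. -/
theorem stmt_2 (f₁ f₂ : ℝ → ℝ)
    (h₁c : StrictConcaveOn ℝ Set.univ f₁) (h₂c : StrictConcaveOn ℝ Set.univ f₂)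
    (h₁d : Differentiable ℝ f₁) (h₂d : Differentiable ℝ f₂)
    (h₁cd : Continuous (deriv f₁)) (h₂cd : Continuous (deriv f₂))
    (p₁ : ℝ) (hp₁ : 0 < p₁)
    (hlt : deriv f₁ p₁ < deriv f₂ 0) :
    ∃ δ : ℝ, 0 < δ ∧ δ < p₁ ∧
      f₁ p₁ + f₂ 0 < f₁ (p₁ - δ) + f₂ δ := by
  have hgc : Continuous (fun x => deriv f₂ x - deriv f₁ (p₁ - x)) :=
    h₂cd.sub (h₁cd.comp (continuous_const.sub continuous_id))
  have hg0 : (0:ℝ) < deriv f₂ 0 - deriv f₁ (p₁ - 0) := by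
    simpa using sub_pos.mpr hlt
  have hmem : (fun x => deriv f₂ x - deriv f₁ (p₁ - x)) ⁻¹' Set.Ioi 0 ∈ nhds (0:ℝ) :=
    hgc.continuousAt.preimage_mem_nhds (Ioi_mem_nhds hg0)
  obtain ⟨ε, hε, hball⟩ := Metric.mem_nhds_iff.mp hmem
  set δ : ℝ := min (ε/2) (p₁/2) with hδdef
  have hδ0 : 0 < δ := lt_min (by linarith) (by linarith)
  have hδp : δ < p₁ := lt_of_le_of_lt (min_le_right _ _) (by linarith)
  have hδε : δ < ε := lt_of_le_of_lt (min_le_left _ _) (by linarith)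
  have hgδ : deriv f₁ (p₁ - δ) < deriv f₂ δ := by
    have : δ ∈ Metric.ball (0:ℝ) ε := by
      simp [Real.dist_eq, abs_of_pos hδ0, hδε]
    have := hball this
    simp only [Set.mem_preimage, Set.mem_Ioi] at this
    linarith
  have h1 : slope f₁ (p₁ - δ) p₁ < deriv f₁ (p₁ - δ) :=
    h₁c.slope_lt_deriv (Set.mem_univ _) (Set.mem_univ _) (by linarith) (h₁d _)
  have h2 : deriv f₂ δ < slope f₂ 0 δ :=
    h₂c.deriv_lt_slope (Set.mem_univ _) (Set.mem_univ _) hδ0 (h₂d _)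
  rw [slope_def_field] at h1 h2
  have e1 : f₁ p₁ - f₁ (p₁ - δ) < deriv f₁ (p₁ - δ) * δ := by
    have := (div_lt_iff₀ hδ0).mp (by
      have : (f₁ p₁ - f₁ (p₁ - δ)) / δ < deriv f₁ (p₁ - δ) := by
        convert h1 using 2 <;> ring
      exact this)
    linarith
  have e2 : deriv f₂ δ * δ < f₂ δ - f₂ 0 := by
    have h2' : deriv f₂ δ < (f₂ δ - f₂ 0) / δ := by
      convert h2 using 2 <;> ring
    have := (lt_div_iff₀ hδ0).mp h2'
    linarith
  have : deriv f₁ (p₁ - δ) * δ ≤ deriv f₂ δ * δ :=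
    mul_le_mul_of_nonneg_right hgδ.le hδ0.le
  exact ⟨δ, hδ0, hδp, by linarith⟩
end

section
/- For the ascending-sum-constraint problem P4 (maximize ∑ f_k(p_k) s.t. ∑_{k=1}^J p_k ≤ P_J for all J = 1,…,K and γ_k ≤ p_k ≤ τ_k), let (p*) be the solution of the relaxed problem using only the last constraint ∑_{k=1}^K p_k ≤ P_K, and suppose J_min is the smallest index with ∑_{k=1}^{J_min} p*_k > P_{J_min}. Then the solution (p̂₁,…,p̂_{J_min}) of the restricted problem over the first J_min subchannels with budget P_{J_min} and box constraints satisfies p̂_k ≤ p*_k for all k ≤ J_min, and hence satisfies all ascending constraints ∑_{k=1}^J p̂_k ≤ P_J for J < J_min. -/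
open Finset

lemma sum_two_support {n k j : ℕ} (hk : k < n) (hj : j < n) (hkj : k ≠ j)
    (g : ℕ → ℝ) (hg : ∀ i, i ≠ k → i ≠ j → g i = 0) :
    ∑ i ∈ Finset.range n, g i = g k + g j := by
  have hsub : ({k, j} : Finset ℕ) ⊆ Finset.range n := by
    intro x hx
    simp only [Finset.mem_insert, Finset.mem_singleton] at hx
    rcases hx with rfl | rfl
    · exact Finset.mem_range.mpr hk
    · exact Finset.mem_range.mpr hj
  rw [← Finset.sum_subset hsub, Finset.sum_pair hkj]
  intro x _ hx
  simp only [Finset.mem_insert, Finset.mem_singleton] at hx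
  push_neg at hx
  exact hg x hx.1 hx.2

lemma sum_diff_two {n k j : ℕ} (hk : k < n) (hj : j < n) (hkj : k ≠ j)
    (p q : ℕ → ℝ) (hpq : ∀ i, i ≠ k → i ≠ j → q i = p i) :
    ∑ i ∈ Finset.range n, q i =
      (∑ i ∈ Finset.range n, p i) + (q k - p k) + (q j - p j) := by
  have h := sum_two_support hk hj hkj (fun i => q i - p i)
    (fun i h1 h2 => by simp [hpq i h1 h2])
  rw [Finset.sum_sub_distrib] at h
  linarith

lemma concave_exchange {f : ℝ → ℝ} (h : ConcaveOn ℝ Set.univ f)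
    {x y ε : ℝ} (hxy : x ≤ y) (hε : 0 ≤ ε) :
    f x + f (y + ε) ≤ f (x + ε) + f y := by
  rcases eq_or_lt_of_le hε with rfl | hε
  · simp
  rcases eq_or_lt_of_le hxy with rfl | hxy
  · linarith
  set d := y + ε - x with hd
  have hd0 : 0 < d := by simp only [hd]; linarith
  have hs : 0 ≤ (y - x) / d := div_nonneg (by linarith) hd0.le
  have ht : 0 ≤ ε / d := by positivity
  have hst : (y - x) / d + ε / d = 1 := by field_simp; rw [hd]; ring
  have hts : ε / d + (y - x) / d = 1 := by linarith
  have h1 := h.2 (Set.mem_univ x) (Set.mem_univ (y + ε)) hs ht hst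
  have h2 := h.2 (Set.mem_univ x) (Set.mem_univ (y + ε)) ht hs hts
  simp only [smul_eq_mul] at h1 h2
  have e1 : (y - x) / d * x + ε / d * (y + ε) = x + ε := by field_simp; ring
  have e2 : ε / d * x + (y - x) / d * (y + ε) = y := by field_simp; ring
  rw [e1] at h1
  rw [e2] at h2
  have key : (y - x) / d * f x + ε / d * f (y + ε) +
      (ε / d * f x + (y - x) / d * f (y + ε)) = f x + f (y + ε) := by
    field_simp
    ring
  linarith

lemma strict_concave_mid {f : ℝ → ℝ} (h : StrictConcaveOn ℝ Set.univ f)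
    {x y : ℝ} (hxy : x ≠ y) : (f x + f y) / 2 < f ((x + y) / 2) := by
  have h2 := h.2 (Set.mem_univ x) (Set.mem_univ y) hxy
    (by norm_num : (0:ℝ) < 1/2) (by norm_num : (0:ℝ) < 1/2) (by norm_num)
  simp only [smul_eq_mul] at h2
  have e : (1/2 : ℝ) * x + (1/2) * y = (x + y) / 2 := by ring
  rw [e] at h2
  linarith
/-- Lemma 8: feasibility of the recursive decomposition for the
ascending-sum-constraint problem P4. -/
theorem stmt_15 (K : ℕ) (f : ℕ → ℝ → ℝ) (Pc : ℕ → ℝ) (γ τ : ℕ → ℝ)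
    (hγτ : ∀ k, γ k ≤ τ k) (hPmono : Monotone Pc)
    (hmono : ∀ k, StrictMono (f k))
    (hconc : ∀ k, StrictConcaveOn ℝ Set.univ (f k))
    (hdiff : ∀ k, Differentiable ℝ (f k))
    (hcont : ∀ k, Continuous (deriv (f k)))
    (pstar : ℕ → ℝ)
    (hstar_feas : (∑ k ∈ Finset.range K, pstar k) ≤ Pc K ∧
      ∀ k < K, γ k ≤ pstar k ∧ pstar k ≤ τ k)
    (hstar_opt : ∀ q : ℕ → ℝ,
      ((∑ k ∈ Finset.range K, q k) ≤ Pc K ∧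
        ∀ k < K, γ k ≤ q k ∧ q k ≤ τ k) →
      (∑ k ∈ Finset.range K, f k (q k)) ≤ ∑ k ∈ Finset.range K, f k (pstar k))
    (Jmin : ℕ) (hJ1 : 1 ≤ Jmin) (hJK : Jmin ≤ K)
    (hviol : Pc Jmin < ∑ k ∈ Finset.range Jmin, pstar k)
    (hminimal : ∀ J, 1 ≤ J → J < Jmin →
      (∑ k ∈ Finset.range J, pstar k) ≤ Pc J)
    (phat : ℕ → ℝ)
    (hhat_feas : (∑ k ∈ Finset.range Jmin, phat k) ≤ Pc Jmin ∧
      ∀ k < Jmin, γ k ≤ phat k ∧ phat k ≤ τ k)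
    (hhat_opt : ∀ q : ℕ → ℝ,
      ((∑ k ∈ Finset.range Jmin, q k) ≤ Pc Jmin ∧
        ∀ k < Jmin, γ k ≤ q k ∧ q k ≤ τ k) →
      (∑ k ∈ Finset.range Jmin, f k (q k)) ≤
        ∑ k ∈ Finset.range Jmin, f k (phat k)) :
    (∀ k < Jmin, phat k ≤ pstar k) ∧
    (∀ J, 1 ≤ J → J < Jmin → (∑ k ∈ Finset.range J, phat k) ≤ Pc J) := by
  have main : ∀ k < Jmin, phat k ≤ pstar k := by
    by_contra hcon
    push_neg at hcon
    obtain ⟨k, hkJ, hk⟩ := hcon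
    have hkK : k < K := lt_of_lt_of_le hkJ hJK
    have hsumlt : ∑ i ∈ Finset.range Jmin, phat i < ∑ i ∈ Finset.range Jmin, pstar i :=
      lt_of_le_of_lt hhat_feas.1 hviol
    have hexj : ∃ j < Jmin, phat j < pstar j := by
      by_contra hj
      push_neg at hj
      exact absurd (Finset.sum_le_sum fun i hi => hj i (Finset.mem_range.mp hi))
        (not_le.mpr hsumlt)
    obtain ⟨j, hjJ, hj⟩ := hexj
    have hjK : j < K := lt_of_lt_of_le hjJ hJK
    have hkj : k ≠ j := by rintro rfl; linarith
    set ε := min (phat k - pstar k) (pstar j - phat j) with hεdef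
    have hε : 0 < ε := lt_min (by linarith) (by linarith)
    have hεa : ε ≤ phat k - pstar k := min_le_left _ _
    have hεb : ε ≤ pstar j - phat j := min_le_right _ _
    -- box facts
    have hγk : γ k ≤ pstar k := (hstar_feas.2 k hkK).1
    have hτk : phat k ≤ τ k := (hhat_feas.2 k hkJ).2
    have hγj : γ j ≤ phat j := (hhat_feas.2 j hjJ).1
    have hτj : pstar j ≤ τ j := (hstar_feas.2 j hjK).2
    -- q1 : perturbed pstar, feasible for the relaxed problem
    set q1 : ℕ → ℝ := fun i =>
      if i = k then pstar k + ε else if i = j then pstar j - ε else pstar i with hq1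
    have hq1k : q1 k = pstar k + ε := by simp [hq1]
    have hq1j : q1 j = pstar j - ε := by simp [hq1, hkj.symm]
    have hq1o : ∀ i, i ≠ k → i ≠ j → q1 i = pstar i := by
      intro i h1 h2; simp [hq1, h1, h2]
    have hq1sum : ∑ i ∈ Finset.range K, q1 i = ∑ i ∈ Finset.range K, pstar i := by
      rw [sum_diff_two hkK hjK hkj pstar q1 hq1o, hq1k, hq1j]; ring
    have hq1feas : (∑ i ∈ Finset.range K, q1 i) ≤ Pc K ∧
        ∀ i < K, γ i ≤ q1 i ∧ q1 i ≤ τ i := by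
      constructor
      · rw [hq1sum]; exact hstar_feas.1
      · intro i hi
        by_cases h1 : i = k
        · subst h1; rw [hq1k]; constructor <;> linarith
        by_cases h2 : i = j
        · subst h2; rw [hq1j]; constructor <;> linarith
        · rw [hq1o i h1 h2]; exact hstar_feas.2 i hi
    have hI1 : f k (pstar k + ε) + f j (pstar j - ε) ≤ f k (pstar k) + f j (pstar j) := by
      have h := hstar_opt q1 hq1feas
      rw [sum_diff_two hkK hjK hkj (fun i => f i (pstar i)) (fun i => f i (q1 i))
        (fun i h1 h2 => by show f i (q1 i) = f i (pstar i); rw [hq1o i h1 h2])] at h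
      rw [hq1k, hq1j] at h
      linarith
    -- q2 : perturbed phat, feasible for the restricted problem
    set q2 : ℕ → ℝ := fun i =>
      if i = k then phat k - ε else if i = j then phat j + ε else phat i with hq2
    have hq2k : q2 k = phat k - ε := by simp [hq2]
    have hq2j : q2 j = phat j + ε := by simp [hq2, hkj.symm]
    have hq2o : ∀ i, i ≠ k → i ≠ j → q2 i = phat i := by
      intro i h1 h2; simp [hq2, h1, h2]
    have hq2sum : ∑ i ∈ Finset.range Jmin, q2 i = ∑ i ∈ Finset.range Jmin, phat i := by
      rw [sum_diff_two hkJ hjJ hkj phat q2 hq2o, hq2k, hq2j]; ring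
    have hq2feas : (∑ i ∈ Finset.range Jmin, q2 i) ≤ Pc Jmin ∧
        ∀ i < Jmin, γ i ≤ q2 i ∧ q2 i ≤ τ i := by
      constructor
      · rw [hq2sum]; exact hhat_feas.1
      · intro i hi
        by_cases h1 : i = k
        · subst h1; rw [hq2k]; constructor <;> linarith
        by_cases h2 : i = j
        · subst h2; rw [hq2j]; constructor <;> linarith
        · rw [hq2o i h1 h2]; exact hhat_feas.2 i hi
    have hI2 : f k (phat k - ε) + f j (phat j + ε) ≤ f k (phat k) + f j (phat j) := by
      have h := hhat_opt q2 hq2feas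
      rw [sum_diff_two hkJ hjJ hkj (fun i => f i (phat i)) (fun i => f i (q2 i))
        (fun i h1 h2 => by show f i (q2 i) = f i (phat i); rw [hq2o i h1 h2])] at h
      rw [hq2k, hq2j] at h
      linarith
    -- concavity exchange inequalities
    have hC1 : f k (pstar k) + f k (phat k) ≤ f k (pstar k + ε) + f k (phat k - ε) := by
      have h := concave_exchange (hconc k).concaveOn (show pstar k ≤ phat k - ε by linarith)
        hε.le
      have e : phat k - ε + ε = phat k := by ring
      rw [e] at h
      linarith
    have hC2 : f j (phat j) + f j (pstar j) ≤ f j (phat j + ε) + f j (pstar j - ε) := by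
      have h := concave_exchange (hconc j).concaveOn (show phat j ≤ pstar j - ε by linarith)
        hε.le
      have e : pstar j - ε + ε = pstar j := by ring
      rw [e] at h
      linarith
    -- hence q2 is also optimal: equality in hI2
    have heq : f k (phat k - ε) + f j (phat j + ε) = f k (phat k) + f j (phat j) := by
      linarith
    -- midpoint q3 strictly improves, contradiction
    set q3 : ℕ → ℝ := fun i =>
      if i = k then phat k - ε / 2 else if i = j then phat j + ε / 2 else phat i with hq3
    have hq3k : q3 k = phat k - ε / 2 := by simp [hq3]
    have hq3j : q3 j = phat j + ε / 2 := by simp [hq3, hkj.symm]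
    have hq3o : ∀ i, i ≠ k → i ≠ j → q3 i = phat i := by
      intro i h1 h2; simp [hq3, h1, h2]
    have hq3feas : (∑ i ∈ Finset.range Jmin, q3 i) ≤ Pc Jmin ∧
        ∀ i < Jmin, γ i ≤ q3 i ∧ q3 i ≤ τ i := by
      constructor
      · rw [sum_diff_two hkJ hjJ hkj phat q3 hq3o, hq3k, hq3j]
        have := hhat_feas.1
        linarith
      · intro i hi
        by_cases h1 : i = k
        · subst h1; rw [hq3k]; constructor <;> linarith
        by_cases h2 : i = j
        · subst h2; rw [hq3j]; constructor <;> linarith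
        · rw [hq3o i h1 h2]; exact hhat_feas.2 i hi
    have hMk : (f k (phat k) + f k (phat k - ε)) / 2 < f k (phat k - ε / 2) := by
      have h := strict_concave_mid (hconc k) (show phat k ≠ phat k - ε by intro h; linarith)
      have e : (phat k + (phat k - ε)) / 2 = phat k - ε / 2 := by ring
      rw [e] at h
      exact h
    have hMj : (f j (phat j) + f j (phat j + ε)) / 2 < f j (phat j + ε / 2) := by
      have h := strict_concave_mid (hconc j) (show phat j ≠ phat j + ε by intro h; linarith)
      have e : (phat j + (phat j + ε)) / 2 = phat j + ε / 2 := by ring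
      rw [e] at h
      exact h
    have h := hhat_opt q3 hq3feas
    rw [sum_diff_two hkJ hjJ hkj (fun i => f i (phat i)) (fun i => f i (q3 i))
      (fun i h1 h2 => by show f i (q3 i) = f i (phat i); rw [hq3o i h1 h2])] at h
    rw [hq3k, hq3j] at h
    linarith
  refine ⟨main, fun J hJ1' hJlt => ?_⟩
  calc ∑ k ∈ Finset.range J, phat k ≤ ∑ k ∈ Finset.range J, pstar k :=
        Finset.sum_le_sum fun i hi =>
          main i (lt_trans (Finset.mem_range.mp hi) hJlt)
    _ ≤ Pc J := hminimal J hJ1' hJlt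
end

section
/- For box-constrained water-filling (maximize ∑_{k∈A} f_k(p_k), s.t. ∑_{k∈A} p_k ≤ Q, γ_k ≤ p_k ≤ τ_k), the optimal allocation is componentwise non-decreasing in the budget Q: if Q₁ ≤ Q₂ (both feasible budgets, i.e., ∑ γ_k ≤ Q₁ ≤ Q₂ ≤ ∑ τ_k), then the optimal solutions p(Q₁), p(Q₂) satisfy p_k(Q₁) ≤ p_k(Q₂) for every k. -/
lemma sum_diff_pair_aux {K : ℕ} (g h : Fin K → ℝ) (i j : Fin K) (hij : i ≠ j)
    (hout : ∀ k, k ≠ i → k ≠ j → h k = g k) :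
    ∑ k, h k = ∑ k, g k + (h i - g i) + (h j - g j) := by
  have h1 : ∑ k ∈ ({i, j} : Finset (Fin K)), (h k - g k) = ∑ k, (h k - g k) := by
    refine Finset.sum_subset (Finset.subset_univ _) ?_
    intro x _ hx
    simp only [Finset.mem_insert, Finset.mem_singleton, not_or] at hx
    rw [hout x hx.1 hx.2]; ring
  rw [Finset.sum_pair hij] at h1
  have h2 : ∑ k, (h k - g k) = ∑ k, h k - ∑ k, g k := Finset.sum_sub_distrib h g
  linarith [h1, h2]

lemma sum_diff_single_aux {K : ℕ} (g h : Fin K → ℝ) (i : Fin K)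
    (hout : ∀ k, k ≠ i → h k = g k) :
    ∑ k, h k = ∑ k, g k + (h i - g i) := by
  have h1 : ∑ k ∈ ({i} : Finset (Fin K)), (h k - g k) = ∑ k, (h k - g k) := by
    refine Finset.sum_subset (Finset.subset_univ _) ?_
    intro x _ hx
    simp only [Finset.mem_singleton] at hx
    rw [hout x hx]; ring
  rw [Finset.sum_singleton] at h1
  have h2 : ∑ k, (h k - g k) = ∑ k, h k - ∑ k, g k := Finset.sum_sub_distrib h g
  linarith [h1, h2]

lemma strict_concave_exchange (f : ℝ → ℝ) (hf : StrictConcaveOn ℝ Set.univ f)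
    (a b ε : ℝ) (hab : a < b) (hε : 0 < ε) (hεb : ε < b - a) :
    f a + f b < f (a + ε) + f (b - ε) := by
  set t := ε / (b - a) with ht
  have hba : (0:ℝ) < b - a := by linarith
  have ht0 : 0 < t := div_pos hε hba
  have ht1 : t < 1 := (div_lt_one hba).2 hεb
  have h1t : 0 < 1 - t := by linarith
  have hne : a ≠ b := ne_of_lt hab
  have htb : t * (b - a) = ε := div_mul_cancel₀ ε hba.ne'
  have e1 : (1 - t) • a + t • b = a + ε := by
    simp only [smul_eq_mul]; linear_combination htb
  have e2 : t • a + (1 - t) • b = b - ε := by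
    simp only [smul_eq_mul]; linear_combination -htb
  have H1 := hf.2 (Set.mem_univ a) (Set.mem_univ b) hne h1t ht0 (by ring)
  have H2 := hf.2 (Set.mem_univ a) (Set.mem_univ b) hne ht0 h1t (by ring)
  rw [e1] at H1
  rw [e2] at H2
  simp only [smul_eq_mul] at H1 H2
  nlinarith [H1, H2]

/-- Budget monotonicity of box-constrained water-filling: the optimal
allocation is componentwise non-decreasing in the budget. -/
theorem stmt_16 (K : ℕ) (f : Fin K → ℝ → ℝ) (γ τ : Fin K → ℝ)
    (hγτ : ∀ k, γ k ≤ τ k)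
    (hmono : ∀ k, StrictMono (f k))
    (hconc : ∀ k, StrictConcaveOn ℝ Set.univ (f k))
    (hdiff : ∀ k, Differentiable ℝ (f k))
    (hcont : ∀ k, Continuous (deriv (f k)))
    (Q₁ Q₂ : ℝ) (hQ₁ : (∑ k, γ k) ≤ Q₁) (hQ : Q₁ ≤ Q₂) (hQ₂ : Q₂ ≤ ∑ k, τ k)
    (p q : Fin K → ℝ)
    (hp_feas : (∑ k, p k) ≤ Q₁ ∧ ∀ k, γ k ≤ p k ∧ p k ≤ τ k)
    (hp_opt : ∀ r : Fin K → ℝ,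
      ((∑ k, r k) ≤ Q₁ ∧ ∀ k, γ k ≤ r k ∧ r k ≤ τ k) →
      (∑ k, f k (r k)) ≤ ∑ k, f k (p k))
    (hq_feas : (∑ k, q k) ≤ Q₂ ∧ ∀ k, γ k ≤ q k ∧ q k ≤ τ k)
    (hq_opt : ∀ r : Fin K → ℝ,
      ((∑ k, r k) ≤ Q₂ ∧ ∀ k, γ k ≤ r k ∧ r k ≤ τ k) →
      (∑ k, f k (r k)) ≤ ∑ k, f k (q k)) :
    ∀ k, p k ≤ q k := by
  intro k₀
  by_contra hlt
  push_neg at hlt   -- q k₀ < p k₀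
  obtain ⟨hpsum, hpbox⟩ := hp_feas
  obtain ⟨hqsum, hqbox⟩ := hq_feas
  by_cases hex : ∃ i, p i < q i
  · obtain ⟨i, hi⟩ := hex
    have hik : i ≠ k₀ := by
      intro h; rw [h] at hi; linarith
    set ε := min (q i - p i) (p k₀ - q k₀) / 2 with hε
    have hε0 : 0 < ε := by
      have := lt_min (by linarith : (0:ℝ) < q i - p i) (by linarith : (0:ℝ) < p k₀ - q k₀)
      positivity
    have hεi : ε < q i - p i := by
      have : ε ≤ (q i - p i) / 2 := by
        apply div_le_div_of_nonneg_right (min_le_left _ _)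
        norm_num
      linarith
    have hεk : ε < p k₀ - q k₀ := by
      have : ε ≤ (p k₀ - q k₀) / 2 := by
        apply div_le_div_of_nonneg_right (min_le_right _ _)
        norm_num
      linarith
    -- perturbed p: move ε from k₀ to i
    set p' : Fin K → ℝ := fun k => if k = i then p i + ε else if k = k₀ then p k₀ - ε else p k with hp'
    have hp'i : p' i = p i + ε := by simp [hp']
    have hp'k : p' k₀ = p k₀ - ε := by simp [hp', hik.symm]
    have hp'out : ∀ k, k ≠ i → k ≠ k₀ → p' k = p k := by
      intro k h1 h2; simp [hp', h1, h2]
    have hp'sum : ∑ k, p' k = ∑ k, p k := by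
      have := sum_diff_pair_aux p p' i k₀ hik hp'out
      rw [hp'i, hp'k] at this; linarith
    have hp'feas : (∑ k, p' k) ≤ Q₁ ∧ ∀ k, γ k ≤ p' k ∧ p' k ≤ τ k := by
      constructor
      · rw [hp'sum]; exact hpsum
      · intro k
        by_cases h1 : k = i
        · subst h1
          rw [hp'i]
          have := hpbox k; have := hqbox k
          constructor <;> linarith
        · by_cases h2 : k = k₀
          · subst h2
            rw [hp'k]
            have := hpbox k; have := hqbox k
            constructor <;> linarith
          · rw [hp'out k h1 h2]; exact hpbox k
    -- perturbed q: move ε from i to k₀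
    set q' : Fin K → ℝ := fun k => if k = i then q i - ε else if k = k₀ then q k₀ + ε else q k with hq'
    have hq'i : q' i = q i - ε := by simp [hq']
    have hq'k : q' k₀ = q k₀ + ε := by simp [hq', hik.symm]
    have hq'out : ∀ k, k ≠ i → k ≠ k₀ → q' k = q k := by
      intro k h1 h2; simp [hq', h1, h2]
    have hq'sum : ∑ k, q' k = ∑ k, q k := by
      have := sum_diff_pair_aux q q' i k₀ hik hq'out
      rw [hq'i, hq'k] at this; linarith
    have hq'feas : (∑ k, q' k) ≤ Q₂ ∧ ∀ k, γ k ≤ q' k ∧ q' k ≤ τ k := by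
      constructor
      · rw [hq'sum]; exact hqsum
      · intro k
        by_cases h1 : k = i
        · subst h1
          rw [hq'i]
          have := hpbox k; have := hqbox k
          constructor <;> linarith
        · by_cases h2 : k = k₀
          · subst h2
            rw [hq'k]
            have := hpbox k; have := hqbox k
            constructor <;> linarith
          · rw [hq'out k h1 h2]; exact hqbox k
    have Hp := hp_opt p' hp'feas
    have Hq := hq_opt q' hq'feas
    have hPsum := sum_diff_pair_aux (fun k => f k (p k)) (fun k => f k (p' k)) i k₀ hik
      (fun k h1 h2 => by show f k (p' k) = f k (p k); rw [hp'out k h1 h2])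
    have hQsum := sum_diff_pair_aux (fun k => f k (q k)) (fun k => f k (q' k)) i k₀ hik
      (fun k h1 h2 => by show f k (q' k) = f k (q k); rw [hq'out k h1 h2])
    simp only [hp'i, hp'k] at hPsum
    simp only [hq'i, hq'k] at hQsum
    -- strict concavity exchanges
    have Ci := strict_concave_exchange (f i) (hconc i) (p i) (q i) ε hi hε0 hεi
    have Ck := strict_concave_exchange (f k₀) (hconc k₀) (q k₀) (p k₀) ε hlt hε0 hεk
    rw [hPsum] at Hp
    rw [hQsum] at Hq
    linarith
  · push_neg at hex   -- ∀ i, q i ≤ p i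
    have hsum_lt : ∑ k, q k < ∑ k, p k := by
      apply Finset.sum_lt_sum (fun i _ => hex i) ⟨k₀, Finset.mem_univ k₀, hlt⟩
    have hslack : ∑ k, q k < Q₂ := lt_of_lt_of_le hsum_lt (le_trans hpsum hQ)
    set ε := min (p k₀ - q k₀) (Q₂ - ∑ k, q k) with hε
    have hε0 : 0 < ε := lt_min (by linarith) (by linarith)
    set q' : Fin K → ℝ := fun k => if k = k₀ then q k₀ + ε else q k with hq'
    have hq'k : q' k₀ = q k₀ + ε := by simp [hq']
    have hq'out : ∀ k, k ≠ k₀ → q' k = q k := by intro k h; simp [hq', h]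
    have hq'sum : ∑ k, q' k = ∑ k, q k + ε := by
      have := sum_diff_single_aux q q' k₀ hq'out
      rw [hq'k] at this; linarith
    have hq'feas : (∑ k, q' k) ≤ Q₂ ∧ ∀ k, γ k ≤ q' k ∧ q' k ≤ τ k := by
      constructor
      · rw [hq'sum]
        have : ε ≤ Q₂ - ∑ k, q k := min_le_right _ _
        linarith
      · intro k
        by_cases h1 : k = k₀
        · subst h1
          rw [hq'k]
          have h2 : ε ≤ p k - q k := min_le_left _ _
          have := hpbox k; have := hqbox k
          constructor <;> linarith
        · rw [hq'out k h1]; exact hqbox k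
    have Hq := hq_opt q' hq'feas
    have hQsum := sum_diff_single_aux (fun k => f k (q k)) (fun k => f k (q' k)) k₀
      (fun k h1 => by show f k (q' k) = f k (q k); rw [hq'out k h1])
    simp only [hq'k] at hQsum
    rw [hQsum] at Hq
    have : f k₀ (q k₀) < f k₀ (q k₀ + ε) := hmono k₀ (by linarith)
    linarith
end
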